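/- For every m ≥ 1 there exists N₀ such that for all N ≥ N₀, every intersection ⋂_{i=1}^m (X_N + a_i) of m translates (mod 1) of the middle 1/N-th Cantor set X_N is nonempty; i.e., the maximal number of simultaneously intersectable translates tends to infinity with N. -/

import Mathlib

open Set

/-- ratio (N-1)/(2N) of each half of the middle-1/N Cantor construction -/
noncomputable def cantorRatio (N : ℕ) : ℝ := (N - 1) / (2 * N)

/-- k-th stage C_k of the middle 1/N Cantor set -/
noncomputable def cantorStage (N : ℕ) : ℕ → Set ℝ
  | 0 => Set.Icc 0 1
  | k + 1 => (fun x => cantorRatio N * x) '' cantorStage N k ∪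
      (fun x => cantorRatio N * x + (N + 1) / (2 * N)) '' cantorStage N k

/-- the middle 1/N Cantor set -/
noncomputable def middleCantorSet (N : ℕ) : Set ℝ := ⋂ k, cantorStage N k

/-- number of stages whose removed middle intervals have length at least δ -/
noncomputable def numStages (N : ℕ) (δ : ℝ) : ℕ :=
  sSup {j : ℕ | δ ≤ 1 / N * cantorRatio N ^ (j - 1)}

/-- X_δ : perform only the removal steps removing intervals of length ≥ δ -/
noncomputable def cantorApprox (N : ℕ) (δ : ℝ) : Set ℝ := cantorStage N (numStages N δ)

/-- translate of a set of reals by b, taken modulo 1 -/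
noncomputable def transl (b : ℝ) (S : Set ℝ) : Set (AddCircle (1 : ℝ)) :=
  (fun x : ℝ => (x : AddCircle (1 : ℝ)) + (b : AddCircle (1 : ℝ))) '' S

set_option maxHeartbeats 1000000

noncomputable def brickEnds (N : ℕ) : ℕ → Set ℝ
  | 0 => {0}
  | k + 1 => (fun x => cantorRatio N * x) '' brickEnds N k ∪
      (fun x => cantorRatio N * x + (N + 1) / (2 * N)) '' brickEnds N k

section facts
variable {N : ℕ} (hN : 3 ≤ N)
include hN

lemma hNr : (3:ℝ) ≤ (N:ℝ) := by exact_mod_cast hN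

lemma hr0 : 0 < cantorRatio N := by
  have := hNr hN
  unfold cantorRatio
  have h1 : (0:ℝ) < 2 * N := by linarith
  have h2 : (0:ℝ) < (N:ℝ) - 1 := by linarith
  positivity

lemma hr_half : cantorRatio N ≤ 1/2 := by
  have := hNr hN
  unfold cantorRatio
  rw [div_le_iff₀ (by linarith)]
  linarith

lemma hr_third : 1/3 ≤ cantorRatio N := by
  have := hNr hN
  unfold cantorRatio
  rw [le_div_iff₀ (by linarith)]
  linarith

lemma hr_lt1 : cantorRatio N < 1 := lt_of_le_of_lt (hr_half hN) (by norm_num)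

lemma hc_eq : ((N:ℝ) + 1) / (2 * N) = 1 - cantorRatio N := by
  have := hNr hN
  unfold cantorRatio
  rw [eq_sub_iff_add_eq, ← add_div, div_eq_one_iff_eq (by linarith)]
  ring

lemma h2r : 1 - 2 * cantorRatio N = 1 / N := by
  have := hNr hN
  unfold cantorRatio
  have h1 : (2:ℝ)*N ≠ 0 := by linarith
  have h2 : (N:ℝ) ≠ 0 := by linarith
  field_simp
  ring_nf
end facts

section struct
variable {N : ℕ}

lemma zero_mem_brick (q : ℕ) : (0:ℝ) ∈ brickEnds N q := by
  induction q with
  | zero => rfl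
  | succ q ih => exact Or.inl ⟨0, ih, by simp⟩

lemma zero_mem_stage (k : ℕ) : (0:ℝ) ∈ cantorStage N k := by
  induction k with
  | zero => exact ⟨le_refl 0, by norm_num⟩
  | succ k ih => exact Or.inl ⟨0, ih, by simp⟩

lemma brick_bounds (hN : 3 ≤ N) {q : ℕ} {e : ℝ} (he : e ∈ brickEnds N q) :
    0 ≤ e ∧ e + cantorRatio N ^ q ≤ 1 := by
  induction q generalizing e with
  | zero => rcases he with rfl; norm_num
  | succ q ih =>
    have hr0 := hr0 hN
    have hr1 := hr_lt1 hN
    have hp : (0:ℝ) < cantorRatio N ^ q := pow_pos hr0 q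
    rcases he with ⟨f, hf, rfl⟩ | ⟨f, hf, rfl⟩ <;> dsimp only <;>
        obtain ⟨h1, h2⟩ := ih hf
    · constructor
      · positivity
      · have heq : cantorRatio N * f + cantorRatio N ^ (q+1)
            = cantorRatio N * (f + cantorRatio N ^ q) := by ring
        rw [heq]; nlinarith
    · rw [hc_eq hN]
      constructor
      · nlinarith
      · have heq : cantorRatio N * f + (1 - cantorRatio N) + cantorRatio N ^ (q+1)
            = cantorRatio N * (f + cantorRatio N ^ q) + (1 - cantorRatio N) := by ring
        rw [heq]; nlinarith

lemma brick_add (hN : 3 ≤ N) {k j : ℕ} {e f : ℝ} (he : e ∈ brickEnds N k)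
    (hf : f ∈ brickEnds N j) : e + cantorRatio N ^ k * f ∈ brickEnds N (k + j) := by
  induction k generalizing e with
  | zero => rcases he with rfl; simpa using hf
  | succ k ih =>
    rw [Nat.succ_add]
    rcases he with ⟨g, hg, rfl⟩ | ⟨g, hg, rfl⟩ <;> dsimp only
    · exact Or.inl ⟨g + cantorRatio N ^ k * f, ih hg, by dsimp only; ring⟩
    · exact Or.inr ⟨g + cantorRatio N ^ k * f, ih hg, by dsimp only; ring⟩

lemma brick_Icc_subset (hN : 3 ≤ N) {k : ℕ} {e : ℝ} (he : e ∈ brickEnds N k) :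
    Icc e (e + cantorRatio N ^ k) ⊆ cantorStage N k := by
  induction k generalizing e with
  | zero => rcases he with rfl; simp [cantorStage]
  | succ k ih =>
    have hr0 := hr0 hN
    have hrne : cantorRatio N ≠ 0 := ne_of_gt hr0
    rcases he with ⟨f, hf, rfl⟩ | ⟨f, hf, rfl⟩ <;> intro x hx <;>
        simp only [Set.mem_Icc] at hx
    · refine Or.inl ⟨x / cantorRatio N, ih hf ⟨?_, ?_⟩, ?_⟩
      · rw [le_div_iff₀ hr0]; nlinarith [hx.1]
      · rw [div_le_iff₀ hr0]; nlinarith [hx.2, pow_succ (cantorRatio N) k]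
      · dsimp only; field_simp
    · refine Or.inr ⟨(x - ((N:ℝ)+1)/(2*N)) / cantorRatio N, ih hf ⟨?_, ?_⟩, ?_⟩
      · rw [le_div_iff₀ hr0]; nlinarith [hx.1]
      · rw [div_le_iff₀ hr0]; nlinarith [hx.2, pow_succ (cantorRatio N) k]
      · dsimp only; field_simp; ring

lemma stage_antitone_succ (hN : 3 ≤ N) (k : ℕ) :
    cantorStage N (k+1) ⊆ cantorStage N k := by
  induction k with
  | zero =>
    have hr0 := hr0 hN
    have hr1 := hr_lt1 hN
    rintro x (⟨y, hy, rfl⟩ | ⟨y, hy, rfl⟩) <;> dsimp only <;>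
        obtain ⟨h1, h2⟩ := hy
    · exact ⟨by nlinarith, by nlinarith⟩
    · rw [hc_eq hN]
      exact ⟨by nlinarith, by nlinarith⟩
  | succ k ih =>
    rintro x (⟨y, hy, rfl⟩ | ⟨y, hy, rfl⟩)
    · exact Or.inl ⟨y, ih hy, rfl⟩
    · exact Or.inr ⟨y, ih hy, rfl⟩

lemma stage_antitone (hN : 3 ≤ N) {k l : ℕ} (h : k ≤ l) :
    cantorStage N l ⊆ cantorStage N k := by
  induction l with
  | zero => simp_all
  | succ l ih =>
    rcases Nat.eq_or_lt_of_le h with rfl | h'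
    · rfl
    · exact (stage_antitone_succ hN l).trans (ih (Nat.lt_succ_iff.mp h'))

end struct

lemma hop {N : ℕ} (hN : 3 ≤ N) :
    ∀ q : ℕ, ∀ u : ℝ, 0 ≤ u → u + cantorRatio N ^ q ≤ 1 →
      ∃ e ∈ brickEnds N q, u ≤ e ∧ e ≤ u + 1/N + cantorRatio N ^ q := by
  have hr0 := hr0 hN
  have hr1 := hr_lt1 hN
  have hNpos : (0:ℝ) < N := by have := hNr hN; linarith
  intro q
  induction q with
  | zero =>
    intro u hu0 hu1
    have : u = 0 := le_antisymm (by simpa using hu1) hu0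
    subst this
    exact ⟨0, rfl, le_refl 0, by positivity⟩
  | succ q ih =>
    intro u hu0 hu1
    set r := cantorRatio N with hrdef
    have hc := hc_eq hN
    have h2r := h2r hN
    have hpq : (0:ℝ) < r ^ q := pow_pos hr0 q
    rcases le_or_gt u (r - r^(q+1)) with hA | hA
    · -- left child
      obtain ⟨e', he', h1, h2⟩ := ih (u / r) (by positivity)
        (by rw [div_add' _ _ _ (ne_of_gt hr0), div_le_one hr0]
            nlinarith [pow_succ r q])
      refine ⟨r * e', Or.inl ⟨e', he', rfl⟩, ?_, ?_⟩
      · calc u = r * (u / r) := by field_simp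
          _ ≤ r * e' := by nlinarith
      · have : r * e' ≤ r * (u / r) + r * (1/N) + r * r^q := by nlinarith
        have hu : r * (u / r) = u := by field_simp
        rw [hu] at this
        have hrN : r * (1/N) ≤ 1/N := by
          have : (0:ℝ) < 1/N := by positivity
          nlinarith
        calc r * e' ≤ u + r * (1/N) + r^(q+1) := by rw [pow_succ]; nlinarith
          _ ≤ u + 1/N + r^(q+1) := by linarith
    · rcases le_or_gt u (1 - r) with hB | hB
      · -- jump to right child start
        refine ⟨r * 0 + ((N:ℝ)+1)/(2*N), Or.inr ⟨0, zero_mem_brick q, rfl⟩, ?_, ?_⟩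
        · rw [hc]; linarith
        · rw [hc]
          have : (1 - r) - u < 1 - 2*r + r^(q+1) := by nlinarith
          rw [h2r] at this
          linarith
      · -- right child
        obtain ⟨e', he', h1, h2⟩ := ih ((u - (1 - r)) / r)
          (div_nonneg (by linarith) (le_of_lt hr0))
          (by rw [div_add' _ _ _ (ne_of_gt hr0), div_le_one hr0]
              nlinarith [pow_succ r q])
        refine ⟨r * e' + ((N:ℝ)+1)/(2*N), Or.inr ⟨e', he', rfl⟩, ?_, ?_⟩
        · rw [hc]
          have : (u - (1-r)) = r * ((u - (1-r))/r) := by field_simp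
          nlinarith
        · rw [hc]
          have hu : r * ((u - (1-r)) / r) = u - (1-r) := by field_simp
          have : r * e' ≤ r * ((u - (1-r))/r) + r * (1/N) + r * r^q := by nlinarith
          rw [hu] at this
          have hrN : r * (1/N) ≤ 1/N := by
            have : (0:ℝ) < 1/N := by positivity
            nlinarith
          calc r * e' + (1 - r) ≤ u + r*(1/N) + r^(q+1) := by rw [pow_succ]; nlinarith
            _ ≤ u + 1/N + r^(q+1) := by linarith

/-- periodized hop: from any real u, find a level-q brick of the translate of
the Cantor structure by `b` (periodized by ℤ) starting within 1/N + r^q to the right. -/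
lemma hopP {N : ℕ} (hN : 3 ≤ N) (q : ℕ) (b u : ℝ) :
    ∃ n : ℤ, ∃ e ∈ brickEnds N q, u ≤ b + n + e ∧ b + n + e ≤ u + 1/N + cantorRatio N ^ q := by
  have hr0 := hr0 hN
  have hNpos : (0:ℝ) < N := by have := hNr hN; linarith
  have hpq : (0:ℝ) < cantorRatio N ^ q := pow_pos hr0 q
  set v := u - b with hv
  set n := ⌊v⌋ with hn
  have h1 : (0:ℝ) ≤ v - n := by
    have := Int.floor_le v
    linarith
  have h2 : v - n < 1 := by
    have := Int.lt_floor_add_one v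
    linarith
  rcases le_or_gt (v - n + cantorRatio N ^ q) 1 with hle | hgt
  · obtain ⟨e, he, he1, he2⟩ := hop hN q (v - n) h1 hle
    refine ⟨n, e, he, ?_, ?_⟩
    · have : b + n = u - (v - n) := by rw [hv]; ring
      rw [this]; linarith
    · have : b + n = u - (v - n) := by rw [hv]; ring
      rw [this]; linarith
  · refine ⟨n + 1, 0, zero_mem_brick q, ?_, ?_⟩
    · push_cast
      have : b + (n + 1 : ℝ) = u + (1 - (v - n)) := by rw [hv]; ring
      rw [add_zero, this]
      linarith
    · push_cast
      have : b + (n + 1 : ℝ) = u + (1 - (v - n)) := by rw [hv]; ring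
      rw [add_zero, this]
      have : 1 - (v - n) < cantorRatio N ^ q := by linarith
      have hN0 : (0:ℝ) ≤ 1/N := by positivity
      linarith

/-- key numeric inequality -/
lemma keyIneq {N m : ℕ} (hm : 1 ≤ m) (hN : 9 ^ m ≤ N) :
    1 / (N:ℝ) ≤ cantorRatio N ^ (2*m - 2) * (1 - 2 * cantorRatio N ^ 2) := by
  have hN3 : 3 ≤ N := le_trans (by calc 3 ≤ 9^1 := by norm_num
                                       _ ≤ 9^m := Nat.pow_le_pow_right (by norm_num) hm) hN
  have hr0 := hr0 hN3
  have hr2 := hr_half hN3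
  have hr3 := hr_third hN3
  have hNpos : (0:ℝ) < N := by have := hNr hN3; linarith
  have h1 : cantorRatio N ^ (2*m-2) ≥ (1/3:ℝ) ^ (2*m-2) :=
    pow_le_pow_left₀ (by norm_num) hr3 _
  have h2 : 1 - 2 * cantorRatio N ^ 2 ≥ 1/2 := by nlinarith
  have h3 : ((1/3:ℝ)) ^ (2*m-2) = 9 / (9:ℝ)^m := by
    have hm2 : 2*m - 2 + 2 = 2*m := by omega
    have e1 : (9:ℝ)^m = 3^(2*m-2) * 9 := by
      rw [show (9:ℝ) = 3^2 by norm_num, ← pow_mul, ← pow_add, hm2, pow_mul]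
    rw [div_pow, one_pow, div_eq_div_iff (by positivity) (by positivity), e1]
    ring
  have hNR : (9:ℝ)^m ≤ N := by exact_mod_cast hN
  have h9pos : (0:ℝ) < 9^m := by positivity
  calc 1/(N:ℝ) ≤ (9/(N:ℝ)) * (1/2) := by
        rw [div_mul_eq_mul_div, div_le_div_iff₀ hNpos hNpos]; nlinarith
    _ ≤ cantorRatio N ^ (2*m-2) * (1 - 2*cantorRatio N ^ 2) := by
        have h6 : (9:ℝ)/N ≤ cantorRatio N ^ (2*m-2) := by
          calc (9:ℝ)/N ≤ 9/(9:ℝ)^m := by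
                apply div_le_div_of_nonneg_left (by norm_num) h9pos hNR
            _ = (1/3:ℝ)^(2*m-2) := h3.symm
            _ ≤ _ := h1
        have h5 : (0:ℝ) ≤ 9/(N:ℝ) := by positivity
        nlinarith

lemma mainInd {N m : ℕ} (hm : 1 ≤ m) (hN : 9 ^ m ≤ N) (a : Fin m → ℝ) :
    ∀ t : ℕ, ∃ (x : ℝ) (B : Fin m → ℝ) (L : Fin m → ℕ),
      ∀ j : Fin m, (j:ℕ) < t →
        (∃ n : ℤ, ∃ e ∈ brickEnds N (L j), B j = a j + n + e) ∧
        B j ≤ x ∧ x + cantorRatio N ^ (2*t) ≤ B j + cantorRatio N ^ (L j) ∧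
        ∃ s : ℕ, s < t ∧ s % m = (j:ℕ) ∧ t ≤ s + m ∧ L j = 2*s + 2 := by
  have hN3 : 3 ≤ N := le_trans (by calc 3 ≤ 9^1 := by norm_num
                                       _ ≤ 9^m := Nat.pow_le_pow_right (by norm_num) hm) hN
  have hr0 := hr0 hN3
  have hr1 := hr_lt1 hN3
  have hr2 := hr_half hN3
  have hNpos : (0:ℝ) < N := by have := hNr hN3; linarith
  have hkey := keyIneq hm hN
  set r := cantorRatio N with hrdef
  intro t
  induction t with
  | zero => exact ⟨0, fun _ => 0, fun _ => 0, fun j hj => absurd hj (by omega)⟩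
  | succ t ih =>
    obtain ⟨x, B, L, hInv⟩ := ih
    have hm0 : 0 < m := hm
    set j₀ : Fin m := ⟨t % m, Nat.mod_lt t hm0⟩ with hj₀def
    have hq2 : (0:ℝ) < r ^ (2*t+2) := pow_pos hr0 _
    have hq0 : (0:ℝ) < r ^ (2*t) := pow_pos hr0 _
    have hE2 : r^(2*t) * r^2 = r^(2*t+2) := by rw [← pow_add]
    -- core step: find new brick for translate j₀ at level 2t+2 inside current interval
    obtain ⟨x', ⟨n', e', he', hx'e⟩, hxx', hx'q⟩ :
        ∃ x', (∃ n : ℤ, ∃ e ∈ brickEnds N (2*t+2), x' = a j₀ + n + e) ∧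
          x ≤ x' ∧ x' + r ^ (2*t+2) ≤ x + r ^ (2*t) := by
      rcases lt_or_ge t m with htm | htm
      · -- first visit: periodized hop
        obtain ⟨n, e, he, h1, h2⟩ := hopP hN3 (2*t+2) (a j₀) x
        rw [← hrdef] at h2
        refine ⟨a j₀ + n + e, ⟨n, e, he, rfl⟩, h1, ?_⟩
        have hLe : r ^ (2*m-2) ≤ r ^ (2*t) :=
          pow_le_pow_of_le_one hr0.le hr1.le (by omega)
        have h3 : 1/(N:ℝ) ≤ r^(2*t) * (1 - 2*r^2) :=
          le_trans hkey (mul_le_mul_of_nonneg_right hLe (by nlinarith))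
        nlinarith
      · -- revisit: scaled hop inside existing brick
        have hj₀t : (j₀:ℕ) < t := lt_of_lt_of_le (Nat.mod_lt t hm0) htm
        obtain ⟨⟨n, e, he, hBe⟩, hBx, hxB, s, hs1, hs2, hs3, hsL⟩ := hInv j₀ hj₀t
        have hpL : (0:ℝ) < r ^ (L j₀) := pow_pos hr0 _
        have hLd : L j₀ + 2*(t-s) = 2*t + 2 := by omega
        have hpow : r ^ (L j₀) * r ^ (2*(t-s)) = r ^ (2*t+2) := by
          rw [← pow_add, hLd]
        have hu'0 : 0 ≤ (x - B j₀) / r ^ (L j₀) :=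
          div_nonneg (by linarith) hpL.le
        have hu'1 : (x - B j₀) / r ^ (L j₀) + r ^ (2*(t-s)) ≤ 1 := by
          rw [div_add' _ _ _ (ne_of_gt hpL), div_le_one hpL]
          have : r ^ (2*t+2) ≤ r ^ (2*t) :=
            pow_le_pow_of_le_one hr0.le hr1.le (by omega)
          nlinarith
        obtain ⟨f, hf, hf1, hf2⟩ := hop hN3 (2*(t-s)) _ hu'0 hu'1
        rw [← hrdef] at hf2
        refine ⟨a j₀ + n + (e + r ^ (L j₀) * f), ⟨n, e + r ^ (L j₀) * f, ?_, rfl⟩, ?_, ?_⟩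
        · have := brick_add hN3 he hf
          rw [← hrdef] at this
          rwa [hLd] at this
        · have := (div_le_iff₀ hpL).mp hf1
          have hBee : a j₀ + n + (e + r ^ (L j₀) * f) = B j₀ + r ^ (L j₀) * f := by
            rw [hBe]; ring
          rw [hBee]; nlinarith
        · have hBee : a j₀ + n + (e + r ^ (L j₀) * f) = B j₀ + r ^ (L j₀) * f := by
            rw [hBe]; ring
          rw [hBee]
          have hfu : r ^ (L j₀) * f ≤ (x - B j₀) + r ^ (L j₀) * (1/N) + r ^ (2*t+2) := by
            have h2' : r ^ (L j₀) * f ≤ r ^ (L j₀) * ((x - B j₀) / r ^ (L j₀) + 1/N + r ^ (2*(t-s))) :=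
              mul_le_mul_of_nonneg_left hf2 hpL.le
            have hdiv : r ^ (L j₀) * ((x - B j₀) / r ^ (L j₀)) = x - B j₀ := by
              field_simp
            nlinarith [hpow]
          have hE1 : r^(2*t-2*m+2) * r^(2*m-2) = r^(2*t) := by
            rw [← pow_add]; congr 1; omega
          have hL_le : r^(L j₀) ≤ r^(2*t-2*m+2) :=
            pow_le_pow_of_le_one hr0.le hr1.le (by omega)
          have hLpos : (0:ℝ) < r^(2*t-2*m+2) := pow_pos hr0 _
          have hfin : r^(L j₀) * (1/N) + 2 * r^(2*t+2) ≤ r^(2*t) := by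
            have k1 : r^(L j₀) * (1/(N:ℝ)) ≤ r^(2*t-2*m+2) * (1/N) :=
              mul_le_mul_of_nonneg_right hL_le (by positivity)
            have k2 : r^(2*t-2*m+2) * (1/(N:ℝ)) ≤ r^(2*t-2*m+2) * (r^(2*m-2) * (1 - 2*r^2)) :=
              mul_le_mul_of_nonneg_left hkey hLpos.le
            nlinarith [pow_pos hr0 (2*m-2)]
          linarith
    -- update the state
    classical
    refine ⟨x', fun i => if i = j₀ then x' else B i, fun i => if i = j₀ then 2*t+2 else L i, ?_⟩
    intro j hj
    have h2t1 : 2*(t+1) = 2*t+2 := by ring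
    by_cases hjj : j = j₀
    · subst hjj
      simp only [if_pos rfl]
      rw [h2t1]
      exact ⟨⟨n', e', he', hx'e⟩, le_refl _, le_refl _, t, by omega, rfl, by omega, rfl⟩
    · have hjne : (j:ℕ) ≠ (j₀:ℕ) := fun h => hjj (Fin.ext h)
      have hjt : (j:ℕ) < t := by
        have hne_t : (j:ℕ) ≠ t := by
          intro h
          apply hjne
          show (j:ℕ) = t % m
          rw [h, Nat.mod_eq_of_lt (h ▸ j.isLt)]
        omega
      obtain ⟨hbrick, hBx, hxB, s, hs1, hs2, hs3, hsL⟩ := hInv j hjt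
      simp only [if_neg hjj]
      rw [h2t1]
      refine ⟨hbrick, by linarith, by linarith, s, by omega, hs2, ?_, hsL⟩
      rcases Nat.lt_or_ge t (s+m) with h | h
      · omega
      · exfalso
        have hts : t = s + m := by omega
        apply hjne
        show (j:ℕ) = t % m
        rw [hts, Nat.add_mod_right, hs2]


lemma stage_inter {N m : ℕ} (hm : 1 ≤ m) (hN : 9 ^ m ≤ N) (a : Fin m → ℝ) (K : ℕ) :
    ∃ x : ℝ, ∀ j : Fin m, ∃ y ∈ cantorStage N K, ∃ n : ℤ, x = a j + n + y := by
  have hN3 : 3 ≤ N := le_trans (by calc 3 ≤ 9^1 := by norm_num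
                                       _ ≤ 9^m := Nat.pow_le_pow_right (by norm_num) hm) hN
  have hr0 := hr0 hN3
  obtain ⟨x, B, L, hInv⟩ := mainInd hm hN a (m + K)
  refine ⟨x, fun j => ?_⟩
  obtain ⟨⟨n, e, he, hBe⟩, hBx, hxB, s, hs1, hs2, hs3, hsL⟩ :=
    hInv j (lt_of_lt_of_le j.isLt (Nat.le_add_right m K))
  have hq0 : (0:ℝ) < cantorRatio N ^ (2*(m+K)) := pow_pos hr0 _
  have hy : x - (a j + n) ∈ Icc e (e + cantorRatio N ^ (L j)) := by
    constructor
    · rw [hBe] at hBx; linarith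
    · rw [hBe] at hxB; linarith
  have hyK : x - (a j + n) ∈ cantorStage N K := by
    apply stage_antitone hN3 (show K ≤ L j by omega)
    exact brick_Icc_subset hN3 he hy
  exact ⟨x - (a j + n), hyK, n, by ring⟩

lemma stage_isCompact {N : ℕ} (k : ℕ) : IsCompact (cantorStage N k) := by
  induction k with
  | zero => exact isCompact_Icc
  | succ k ih =>
    exact (ih.image (continuous_const.mul continuous_id)).union
      (ih.image ((continuous_const.mul continuous_id).add continuous_const))

lemma int_coe_addCircle (n : ℤ) : (((n:ℝ)) : AddCircle (1:ℝ)) = 0 := by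
  rw [AddCircle.coe_eq_zero_iff]
  exact ⟨n, by simp⟩

lemma circle_inter_stage {N m : ℕ} (hm : 1 ≤ m) (hN : 9 ^ m ≤ N) (a : Fin m → ℝ) (K : ℕ) :
    (⋂ j : Fin m, transl (a j) (cantorStage N K)).Nonempty := by
  obtain ⟨x, hx⟩ := stage_inter hm hN a K
  refine ⟨(x : AddCircle (1:ℝ)), Set.mem_iInter.mpr fun j => ?_⟩
  obtain ⟨y, hy, n, rfl⟩ := hx j
  refine ⟨y, hy, ?_⟩
  show (y : AddCircle (1:ℝ)) + (a j : AddCircle (1:ℝ)) = ((a j + n + y : ℝ) : AddCircle (1:ℝ))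
  rw [AddCircle.coe_add, AddCircle.coe_add, int_coe_addCircle]
  abel

theorem middle_inter {N m : ℕ} (hm : 1 ≤ m) (hN : 9 ^ m ≤ N) (a : Fin m → ℝ) :
    (⋂ j : Fin m, transl (a j) (middleCantorSet N)).Nonempty := by
  have hN3 : 3 ≤ N := le_trans (by calc 3 ≤ 9^1 := by norm_num
                                       _ ≤ 9^m := Nat.pow_le_pow_right (by norm_num) hm) hN
  haveI : Fact ((0:ℝ) < 1) := ⟨one_pos⟩
  have hcont : ∀ b : ℝ, Continuous (fun x : ℝ => (x : AddCircle (1:ℝ)) + (b : AddCircle (1:ℝ))) :=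
    fun b => (AddCircle.continuous_mk' 1).add continuous_const
  set Z : ℕ → Set (AddCircle (1:ℝ)) := fun K => ⋂ j : Fin m, transl (a j) (cantorStage N K)
    with hZ
  have hZcompact : ∀ K, IsCompact (Z K) := by
    intro K
    have hcl : IsClosed (Z K) := by
      apply isClosed_iInter
      intro j
      have h1 : IsCompact (transl (a j) (cantorStage N K)) :=
        (stage_isCompact K).image (hcont (a j))
      exact h1.isClosed
    have hcpt : IsCompact (transl (a ⟨0, hm⟩) (cantorStage N K)) :=
      (stage_isCompact K).image (hcont _)
    have hsub : Z K ⊆ transl (a ⟨0, hm⟩) (cantorStage N K) :=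
      Set.iInter_subset _ _
    exact IsCompact.of_isClosed_subset hcpt hcl hsub
  have hZanti : Antitone Z := by
    intro K K' hKK'
    apply Set.iInter_mono
    intro j
    exact Set.image_mono (stage_antitone hN3 hKK')
  have hZne : ∀ K, (Z K).Nonempty := circle_inter_stage hm hN a
  obtain ⟨z, hz⟩ := IsCompact.nonempty_iInter_of_directed_nonempty_isCompact_isClosed
    Z hZanti.directed_ge hZne hZcompact (fun K => (hZcompact K).isClosed)
  rw [Set.mem_iInter] at hz
  refine ⟨z, Set.mem_iInter.mpr fun j => ?_⟩
  -- for each j : the representative argument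
  set w : AddCircle (1:ℝ) := z - ((a j : ℝ) : AddCircle (1:ℝ)) with hw
  have hmem : ∀ K, ∃ y ∈ cantorStage N K, (y : AddCircle (1:ℝ)) = w := by
    intro K
    obtain ⟨y, hy, hyz⟩ := Set.mem_iInter.mp (hz K) j
    exact ⟨y, hy, by rw [hw, ← hyz]; exact (add_sub_cancel_right _ _).symm⟩
  set y₀ : ℝ := ((AddCircle.equivIco 1 0 w : Ico (0:ℝ) (0+1)) : ℝ) with hy₀
  have hy₀w : ((y₀ : ℝ) : AddCircle (1:ℝ)) = w :=
    (AddCircle.equivIco 1 0).symm_apply_apply w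
  have hy₀mem : y₀ ∈ Ico (0:ℝ) (0+1) := (AddCircle.equivIco 1 0 w).2
  by_cases h0 : y₀ = 0
  · refine ⟨0, Set.mem_iInter.mpr (fun k => zero_mem_stage k), ?_⟩
    show ((0:ℝ) : AddCircle (1:ℝ)) + ↑(a j) = z
    have hw0 : w = 0 := by
      rw [← hy₀w, h0]
      norm_cast
    have hz : z = ((a j : ℝ) : AddCircle (1:ℝ)) := by
      have := sub_eq_zero.mp (hw ▸ hw0)
      exact this
    rw [hz]
    norm_cast
    simp
  · have h01 : 0 < y₀ ∧ y₀ < 1 :=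
      ⟨lt_of_le_of_ne hy₀mem.1 (Ne.symm h0), by linarith [hy₀mem.2]⟩
    refine ⟨y₀, Set.mem_iInter.mpr (fun K => ?_), ?_⟩
    · obtain ⟨y, hyK, hyw⟩ := hmem K
      have hcoe : ((y:ℝ) : AddCircle (1:ℝ)) = ((y₀:ℝ) : AddCircle (1:ℝ)) := by
        rw [hyw, hy₀w]
      have hsub : y - y₀ ∈ AddSubgroup.zmultiples (1:ℝ) :=
        (QuotientAddGroup.eq_iff_sub_mem).mp hcoe
      obtain ⟨k, hk⟩ := AddSubgroup.mem_zmultiples_iff.mp hsub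
      have hk' : (k:ℝ) = y - y₀ := by
        rw [← hk]; simp
      have hy01 : y ∈ Icc (0:ℝ) 1 := stage_antitone hN3 (Nat.zero_le K) hyK
      have hkl : (-1:ℝ) < (k:ℝ) := by rw [hk']; have := hy01.1; linarith
      have hku : (k:ℝ) < 1 := by rw [hk']; have := hy01.2; linarith [h01.1]
      have hk0 : k = 0 := by
        have h1 : (-1:ℤ) < k := by exact_mod_cast hkl
        have h2 : k < 1 := by exact_mod_cast hku
        omega
      have : y = y₀ := by
        rw [hk0] at hk'
        simp at hk'
        linarith
      rwa [← this]
    · show ((y₀:ℝ) : AddCircle (1:ℝ)) + ↑(a j) = z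
      rw [hy₀w, hw]
      exact sub_add_cancel z _

theorem stmt19 (m : ℕ) (hm : 1 ≤ m) : ∃ N₀ : ℕ, ∀ N : ℕ, N₀ ≤ N →
    ∀ a : Fin m → ℝ, (⋂ i, transl (a i) (middleCantorSet N)).Nonempty := by
  exact ⟨9^m, fun N hN a => middle_inter hm hN a⟩
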